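/- arXiv:1702.04821 — 8 statements merged into one kernel-verified Lean document; each statement's English description precedes it below -/
import Mathlib

section
/- For every nonnegative integer n, the sum over all pairs of nonnegative integers (k, l) with k + l = n of (1/(k+1)) * C(2k, k) * C(2l+2, l+1) equals 2 * C(2n+2, n). Equivalently, ∑_{k=0}^{n} (1/(k+1)) * C(2k, k) * C(2(n-k)+2, n-k+1) = 2 * C(2n+2, n). -/
open Finset PowerSeries

private lemma cb_rec (m : ℕ) :
    Nat.centralBinom (m + 1) + 2 * catalan m = 4 * Nat.centralBinom m := by
  have h1 := Nat.succ_mul_centralBinom_succ m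
  have h2 := succ_mul_catalan_eq_centralBinom m
  have h3 : (m + 1) * (Nat.centralBinom (m + 1) + 2 * catalan m)
      = (m + 1) * (4 * Nat.centralBinom m) := by nlinarith [h1, h2]
  exact Nat.eq_of_mul_eq_mul_left (Nat.succ_pos m) h3

private noncomputable def Aps : PowerSeries ℕ := PowerSeries.mk catalan
private noncomputable def Bps : PowerSeries ℕ := PowerSeries.mk Nat.centralBinom

private lemma coeffAB (m : ℕ) : (PowerSeries.coeff m) (Aps * Bps)
    = ∑ k ∈ range (m + 1), catalan k * Nat.centralBinom (m - k) := by
  rw [PowerSeries.coeff_mul, Finset.Nat.sum_antidiagonal_eq_sum_range_succ_mk]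
  simp [Aps, Bps]

private lemma key : ∀ n : ℕ,
    2 * (PowerSeries.coeff n) (Aps * Bps) = Nat.centralBinom (n + 1) := by
  intro n
  induction n using Nat.strong_induction_on with
  | _ n ih =>
    match n with
    | 0 => simp [coeffAB, Nat.centralBinom]
    | Nat.succ n =>
      have E1 : (PowerSeries.coeff (n + 1)) (Aps * Bps)
          = (∑ k ∈ range (n + 1), catalan (k + 1) * Nat.centralBinom (n - k))
            + Nat.centralBinom (n + 1) := by
        rw [coeffAB, Finset.sum_range_succ']
        simp
      have hAA : ∀ k : ℕ, (PowerSeries.coeff k) (Aps * Aps) = catalan (k + 1) := by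
        intro k
        rw [PowerSeries.coeff_mul, catalan_succ']
        simp [Aps]
      have hX : (∑ k ∈ range (n + 1), catalan (k + 1) * Nat.centralBinom (n - k))
          = (PowerSeries.coeff n) (Aps * Aps * Bps) := by
        rw [PowerSeries.coeff_mul, Finset.Nat.sum_antidiagonal_eq_sum_range_succ_mk]
        simp [hAA, Bps]
      have hX2 : (PowerSeries.coeff n) (Aps * Aps * Bps)
          = ∑ i ∈ range (n + 1), catalan i * (PowerSeries.coeff (n - i)) (Aps * Bps) := by
        rw [mul_assoc, PowerSeries.coeff_mul, Finset.Nat.sum_antidiagonal_eq_sum_range_succ_mk]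
        simp [Aps]
      have h2X : 2 * (∑ k ∈ range (n + 1), catalan (k + 1) * Nat.centralBinom (n - k))
          = ∑ i ∈ range (n + 1), catalan i * Nat.centralBinom (n - i + 1) := by
        rw [hX, hX2, Finset.mul_sum]
        refine Finset.sum_congr rfl fun i hi => ?_
        rw [← ih (n - i) (by simp at hi; omega), ← mul_assoc, mul_comm 2 (catalan i), mul_assoc]
      have E2 : (PowerSeries.coeff (n + 1)) (Aps * Bps)
          = (∑ i ∈ range (n + 1), catalan i * Nat.centralBinom (n - i + 1))
            + catalan (n + 1) := by
        rw [coeffAB, Finset.sum_range_succ]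
        simp only [Nat.sub_self, Nat.centralBinom_zero, mul_one]
        congr 1
        refine Finset.sum_congr rfl fun i hi => ?_
        simp at hi
        congr 2
        omega
      have E3 := cb_rec (n + 1)
      show 2 * (PowerSeries.coeff (n + 1)) (Aps * Bps) = Nat.centralBinom (n + 1 + 1)
      omega
  
private lemma keySum (n : ℕ) :
    2 * (∑ k ∈ range (n + 1), catalan k * Nat.centralBinom (n - k)) = Nat.centralBinom (n + 1) := by
  rw [← coeffAB]; exact key n

private lemma lemC (n : ℕ) :
    catalan (n + 1) + Nat.choose (2 * n + 2) n = Nat.centralBinom (n + 1) := by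
  have h1 := succ_mul_catalan_eq_centralBinom (n + 1)
  have h2 : Nat.choose (2 * n + 2) (n + 1) * (n + 1) = Nat.choose (2 * n + 2) n * (n + 2) := by
    have := Nat.choose_succ_right_eq (2 * n + 2) n
    rw [this]; congr 1; omega
  have hcb : Nat.centralBinom (n + 1) = Nat.choose (2 * n + 2) (n + 1) := by
    have h4 : 2 * n + 2 = 2 * (n + 1) := by ring
    rw [h4]; rfl
  have h3 : (n + 2) * (catalan (n + 1) + Nat.choose (2 * n + 2) n)
      = (n + 2) * Nat.centralBinom (n + 1) := by
    rw [hcb] at h1 ⊢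
    nlinarith [h1, h2]
  exact Nat.eq_of_mul_eq_mul_left (by omega) h3

theorem stmt_0 (n : ℕ) :
    ∑ k ∈ Finset.range (n + 1),
      catalan k * Nat.choose (2 * (n - k) + 2) (n - k + 1) =
    2 * Nat.choose (2 * n + 2) n := by
  have hks := keySum (n + 1)
  have hsplit : (∑ k ∈ range (n + 2), catalan k * Nat.centralBinom (n + 1 - k))
      = (∑ k ∈ range (n + 1), catalan k * Nat.choose (2 * (n - k) + 2) (n - k + 1))
        + catalan (n + 1) := by
    rw [Finset.sum_range_succ]
    simp only [Nat.sub_self, Nat.centralBinom_zero, mul_one]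
    congr 1
    refine Finset.sum_congr rfl fun i hi => ?_
    simp at hi
    have : n + 1 - i = (n - i) + 1 := by omega
    rw [this]
    have h5 : 2 * (n - i) + 2 = 2 * (n - i + 1) := by ring
    rw [h5]; rfl
  rw [hsplit] at hks
  have E3 := cb_rec (n + 1)
  have hC := lemC n
  omega
end

section
/- For every positive integer n, 2 * ∑_{k=0}^{n} C(2n, k) * C(2n+1, k) = C(4n+1, 2n) + C(2n, n)^2. -/
open Finset

theorem stmt_3 (n : ℕ) (hn : 0 < n) :
    2 * ∑ k ∈ Finset.range (n + 1), Nat.choose (2 * n) k * Nat.choose (2 * n + 1) k =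
    Nat.choose (4 * n + 1) (2 * n) + (Nat.choose (2 * n) n) ^ 2 := by
  have key1 : Nat.choose (4 * n + 1) (2 * n) =
      ∑ k ∈ range (2 * n + 1), Nat.choose (2 * n) k * Nat.choose (2 * n + 1) k := by
    have h := Nat.add_choose_eq (2 * n) (2 * n + 1) (2 * n)
    rw [Finset.Nat.sum_antidiagonal_eq_sum_range_succ_mk] at h
    have h4 : 4 * n + 1 = 2 * n + (2 * n + 1) := by ring
    rw [h4, h,
      ← Finset.sum_range_reflect (fun i => Nat.choose (2 * n) i * Nat.choose (2 * n + 1) i)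
        (2 * n + 1)]
    refine Finset.sum_congr rfl fun i hi => ?_
    simp only [mem_range] at hi
    have hi' : i ≤ 2 * n := Nat.lt_succ_iff.mp hi
    have h1 : 2 * n + 1 - 1 - i = 2 * n - i := by omega
    rw [h1, Nat.choose_symm hi']
  -- split the full sum into the first half plus a reflected tail
  have key2 : ∑ k ∈ range (2 * n + 1), Nat.choose (2 * n) k * Nat.choose (2 * n + 1) k =
      (∑ k ∈ range (n + 1), Nat.choose (2 * n) k * Nat.choose (2 * n + 1) k) +
      ∑ k ∈ range n, Nat.choose (2 * n) k * Nat.choose (2 * n + 1) (k + 1) := by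
    have hsplit : range (2 * n + 1) = range ((n + 1) + n) := by
      congr 1; ring
    rw [hsplit, Finset.sum_range_add]
    congr 1
    rw [← Finset.sum_range_reflect
      (fun i => Nat.choose (2 * n) (n + 1 + i) * Nat.choose (2 * n + 1) (n + 1 + i)) n]
    refine Finset.sum_congr rfl fun i hi => ?_
    simp only [mem_range] at hi
    have h1 : n + 1 + (n - 1 - i) = 2 * n - i := by omega
    rw [h1]
    have h2 : 2 * n - i = 2 * n - i := rfl
    have ha : Nat.choose (2 * n) (2 * n - i) = Nat.choose (2 * n) i :=
      Nat.choose_symm (by omega)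
    have hb : Nat.choose (2 * n + 1) (2 * n - i) = Nat.choose (2 * n + 1) (i + 1) := by
      have : 2 * n - i = (2 * n + 1) - (i + 1) := by omega
      rw [this, Nat.choose_symm (by omega)]
    rw [ha, hb]
  -- telescoping identity over ℤ
  have key3 : (∑ k ∈ range (n + 1),
        (Nat.choose (2 * n) k : ℤ) * Nat.choose (2 * n + 1) k) =
      (∑ k ∈ range n, (Nat.choose (2 * n) k : ℤ) * Nat.choose (2 * n + 1) (k + 1)) +
      (Nat.choose (2 * n) n : ℤ) ^ 2 := by
    rw [Finset.sum_range_succ']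
    have step : (∑ k ∈ range n,
          (Nat.choose (2 * n) (k + 1) : ℤ) * Nat.choose (2 * n + 1) (k + 1)) -
        (∑ k ∈ range n, (Nat.choose (2 * n) k : ℤ) * Nat.choose (2 * n + 1) (k + 1)) =
        (Nat.choose (2 * n) n : ℤ) ^ 2 - (Nat.choose (2 * n) 0 : ℤ) ^ 2 := by
      rw [← Finset.sum_sub_distrib]
      rw [← Finset.sum_range_sub (fun k => (Nat.choose (2 * n) k : ℤ) ^ 2) n]
      refine Finset.sum_congr rfl fun k _ => ?_
      have hp : Nat.choose (2 * n + 1) (k + 1) =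
          Nat.choose (2 * n) k + Nat.choose (2 * n) (k + 1) := Nat.choose_succ_succ _ _
      push_cast [hp]
      ring
    simp only [Nat.choose_zero_right, Nat.cast_one] at step ⊢
    linarith [step]
  -- combine everything over ℤ
  have final : (2 * ∑ k ∈ range (n + 1),
        (Nat.choose (2 * n) k : ℤ) * Nat.choose (2 * n + 1) k) =
      (Nat.choose (4 * n + 1) (2 * n) : ℤ) + (Nat.choose (2 * n) n : ℤ) ^ 2 := by
    have k1 : (Nat.choose (4 * n + 1) (2 * n) : ℤ) =
        ∑ k ∈ range (2 * n + 1), (Nat.choose (2 * n) k : ℤ) * Nat.choose (2 * n + 1) k := by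
      exact_mod_cast key1
    have k2 : (∑ k ∈ range (2 * n + 1),
          (Nat.choose (2 * n) k : ℤ) * Nat.choose (2 * n + 1) k) =
        (∑ k ∈ range (n + 1), (Nat.choose (2 * n) k : ℤ) * Nat.choose (2 * n + 1) k) +
        ∑ k ∈ range n, (Nat.choose (2 * n) k : ℤ) * Nat.choose (2 * n + 1) (k + 1) := by
      exact_mod_cast key2
    rw [two_mul, k1, k2, key3]
    ring
  exact_mod_cast final
end

section
/- For all positive integers n, r, and s, C(n+r, n) * ∑_{k=0}^{s-1} C(r+k, r-1) * C(n+k, n) = C(n+s, n) * ∑_{k=0}^{r-1} C(s+k, s-1) * C(n+k, n). -/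
open Finset Nat

private lemma key5 (n a b : ℕ) :
    (n+b+2).choose n * ((a+b+3).choose (b+1) * (n+a+1).choose n)
      + (n+a+1).choose n * ((a+b+2).choose a * (n+b+1).choose n)
  = (n+b+1).choose n * ((a+b+2).choose b * (n+a+1).choose n)
      + (n+a+2).choose n * ((a+b+3).choose (a+1) * (n+b+1).choose n) := by
  have e1 : ((n+b+2).choose n : ℚ) = (n+b+2)! / (n ! * (b+2)!) := by
    rw [Nat.cast_choose ℚ (by omega), show n+b+2-n = b+2 from by omega]
  have e2 : ((a+b+3).choose (b+1) : ℚ) = (a+b+3)! / ((b+1)! * (a+2)!) := by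
    rw [Nat.cast_choose ℚ (by omega), show a+b+3-(b+1) = a+2 from by omega]
  have e3 : ((n+a+1).choose n : ℚ) = (n+a+1)! / (n ! * (a+1)!) := by
    rw [Nat.cast_choose ℚ (by omega), show n+a+1-n = a+1 from by omega]
  have e4 : ((a+b+2).choose a : ℚ) = (a+b+2)! / (a ! * (b+2)!) := by
    rw [Nat.cast_choose ℚ (by omega), show a+b+2-a = b+2 from by omega]
  have e5 : ((n+b+1).choose n : ℚ) = (n+b+1)! / (n ! * (b+1)!) := by
    rw [Nat.cast_choose ℚ (by omega), show n+b+1-n = b+1 from by omega]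
  have e6 : ((a+b+2).choose b : ℚ) = (a+b+2)! / (b ! * (a+2)!) := by
    rw [Nat.cast_choose ℚ (by omega), show a+b+2-b = a+2 from by omega]
  have e7 : ((n+a+2).choose n : ℚ) = (n+a+2)! / (n ! * (a+2)!) := by
    rw [Nat.cast_choose ℚ (by omega), show n+a+2-n = a+2 from by omega]
  have e8 : ((a+b+3).choose (a+1) : ℚ) = (a+b+3)! / ((a+1)! * (b+2)!) := by
    rw [Nat.cast_choose ℚ (by omega), show a+b+3-(a+1) = b+2 from by omega]
  have f1 : ((n+b+2)! : ℚ) = (n+b+2) * (n+b+1)! := by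
    rw [show n+b+2 = (n+b+1)+1 from rfl, Nat.factorial_succ]; push_cast; ring
  have f2 : ((a+b+3)! : ℚ) = (a+b+3) * (a+b+2)! := by
    rw [show a+b+3 = (a+b+2)+1 from rfl, Nat.factorial_succ]; push_cast; ring
  have f3 : ((n+a+2)! : ℚ) = (n+a+2) * (n+a+1)! := by
    rw [show n+a+2 = (n+a+1)+1 from rfl, Nat.factorial_succ]; push_cast; ring
  have f4 : ((b+2)! : ℚ) = (b+2) * ((b+1) * (b)!) := by
    rw [show b+2 = (b+1)+1 from rfl, Nat.factorial_succ, Nat.factorial_succ]; push_cast; ring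
  have f6 : ((a+2)! : ℚ) = (a+2) * ((a+1) * (a)!) := by
    rw [show a+2 = (a+1)+1 from rfl, Nat.factorial_succ, Nat.factorial_succ]; push_cast; ring
  have hn : ((n)! : ℚ) ≠ 0 := by exact_mod_cast (Nat.factorial_pos n).ne'
  have ha : ((a)! : ℚ) ≠ 0 := by exact_mod_cast (Nat.factorial_pos a).ne'
  have hb : ((b)! : ℚ) ≠ 0 := by exact_mod_cast (Nat.factorial_pos b).ne'
  have hna : ((n+a+1)! : ℚ) ≠ 0 := by exact_mod_cast (Nat.factorial_pos _).ne'
  have hnb : ((n+b+1)! : ℚ) ≠ 0 := by exact_mod_cast (Nat.factorial_pos _).ne'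
  have hab : ((a+b+2)! : ℚ) ≠ 0 := by exact_mod_cast (Nat.factorial_pos _).ne'
  have goal : ((n+b+2).choose n * ((a+b+3).choose (b+1) * (n+a+1).choose n)
      + (n+a+1).choose n * ((a+b+2).choose a * (n+b+1).choose n) : ℚ)
    = (n+b+1).choose n * ((a+b+2).choose b * (n+a+1).choose n)
      + (n+a+2).choose n * ((a+b+3).choose (a+1) * (n+b+1).choose n) := by
    rw [e1, e2, e3, e4, e5, e6, e7, e8, f1, f2, f3, f4, f6]
    field_simp
    ring
  exact_mod_cast goal

private lemma star5 (n b : ℕ) : ∀ a : ℕ,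
    (n+b+2).choose n * ∑ k ∈ range (a+1), (b+2+k).choose (b+1) * (n+k).choose n
  = (n+b+1).choose n * ∑ k ∈ range (a+1), (b+1+k).choose b * (n+k).choose n
      + (n+a+1).choose n * ((a+b+2).choose a * (n+b+1).choose n) := by
  intro a
  induction a with
  | zero =>
    simp [Nat.choose_succ_self_right]
    have h1 : (n+b+2).choose n = (n+b+2).choose (b+2) :=
      Nat.choose_symm_of_eq_add (by omega)
    have h2 : (n+b+1).choose n = (n+b+1).choose (b+1) :=
      Nat.choose_symm_of_eq_add (by omega)
    have h3 := Nat.add_one_mul_choose_eq (n+b+1) (b+1)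
    zify [h1, h2] at *
    nlinarith [h3]
  | succ a ih =>
    rw [Finset.sum_range_succ _ (a+1), Finset.sum_range_succ _ (a+1), Nat.mul_add, Nat.mul_add, ih]
    have h := key5 n a b
    rw [show b+2+(a+1) = a+b+3 from by omega, show n+(a+1) = n+a+1 from by omega,
        show b+1+(a+1) = a+b+2 from by omega, show a+1+b+2 = a+b+3 from by omega]
    nlinarith [h]

private lemma main5 (n a : ℕ) : ∀ c : ℕ,
    (n+a+1).choose n * ∑ k ∈ range (c+1), (a+1+k).choose a * (n+k).choose n
  = (n+c+1).choose n * ∑ k ∈ range (a+1), (c+1+k).choose c * (n+k).choose n := by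
  intro c
  induction c with
  | zero =>
    simp [Nat.choose_succ_self_right]
    have h1 : ∑ k ∈ range (a+1), (n+k).choose n = (a+n+1).choose (n+1) := by
      rw [← Nat.sum_range_add_choose a n]
      exact Finset.sum_congr rfl fun k _ => by rw [Nat.add_comm n k]
    have h2 := Nat.choose_succ_right_eq (n+a+1) n
    rw [show n+a+1-n = a+1 from by omega] at h2
    rw [h1, show a+n+1 = n+a+1 from by omega]
    linarith [h2]
  | succ c ih =>
    rw [Finset.sum_range_succ _ (c+1), Nat.mul_add, ih]
    have h := star5 n c a
    rw [show a+1+(c+1) = a+c+2 from by omega, show n+(c+1) = n+c+1 from by omega,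
        show n+c+1+1 = n+c+2 from by omega, show c+1+1 = c+2 from by omega]
    exact h.symm

theorem stmt_5 (n r s : ℕ) (hn : 0 < n) (hr : 0 < r) (hs : 0 < s) :
    Nat.choose (n + r) n *
        ∑ k ∈ Finset.range s, Nat.choose (r + k) (r - 1) * Nat.choose (n + k) n =
    Nat.choose (n + s) n *
        ∑ k ∈ Finset.range r, Nat.choose (s + k) (s - 1) * Nat.choose (n + k) n := by
  obtain ⟨a, rfl⟩ : ∃ a, r = a + 1 := ⟨r - 1, by omega⟩
  obtain ⟨c, rfl⟩ : ∃ c, s = c + 1 := ⟨s - 1, by omega⟩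
  simp only [Nat.add_sub_cancel]
  rw [show n+(a+1) = n+a+1 from by omega, show n+(c+1) = n+c+1 from by omega]
  exact main5 n a c
end

section
/- For all positive integers n and m, ∑_{i=0}^{n} ∑_{j=0}^{m} C(n, i) * C(m, j) * C(i+j, n) = C(n+m, n) * 2^m. -/
lemma aux_sum_choose (n k : ℕ) :
    ∑ i ∈ Finset.range (n + 1), Nat.choose n i * Nat.choose i k =
      Nat.choose n k * 2 ^ (n - k) := by
  rcases le_or_gt k n with h | h
  · rw [Finset.range_eq_Ico,
      ← Finset.sum_Ico_consecutive _ (Nat.zero_le k) (by omega : k ≤ n + 1)]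
    have h1 : ∑ i ∈ Finset.Ico 0 k, Nat.choose n i * Nat.choose i k = 0 :=
      Finset.sum_eq_zero fun i hi => by
        simp [Nat.choose_eq_zero_of_lt (Finset.mem_Ico.mp hi).2]
    rw [h1, zero_add, Finset.sum_Ico_eq_sum_range]
    have h2 : n + 1 - k = (n - k) + 1 := by omega
    rw [h2]
    have h3 : ∀ t ∈ Finset.range (n - k + 1),
        Nat.choose n (k + t) * Nat.choose (k + t) k =
          Nat.choose n k * Nat.choose (n - k) t := by
      intro t ht
      have ht' : t ≤ n - k := by
        simpa using Nat.lt_succ_iff.mp (Finset.mem_range.mp ht)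
      have := Nat.choose_mul (n := n) (Nat.le_add_right k t)
      simpa [Nat.add_sub_cancel_left] using this
    rw [Finset.sum_congr rfl h3, ← Finset.mul_sum, Nat.sum_range_choose]
  · have h1 : ∑ i ∈ Finset.range (n + 1), Nat.choose n i * Nat.choose i k = 0 :=
      Finset.sum_eq_zero fun i hi => by
        have : i < k := by
          have := Finset.mem_range.mp hi; omega
        simp [Nat.choose_eq_zero_of_lt this]
    rw [h1, Nat.choose_eq_zero_of_lt h, zero_mul]

theorem stmt_8 (n m : ℕ) (hn : 0 < n) (hm : 0 < m) :
    ∑ i ∈ Finset.range (n + 1), ∑ j ∈ Finset.range (m + 1),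
        Nat.choose n i * Nat.choose m j * Nat.choose (i + j) n =
    Nat.choose (n + m) n * 2 ^ m := by
  have expand : ∀ i j : ℕ, Nat.choose (i + j) n =
      ∑ a ∈ Finset.range (n + 1), Nat.choose i a * Nat.choose j (n - a) := by
    intro i j
    rw [Nat.add_choose_eq, Finset.Nat.sum_antidiagonal_eq_sum_range_succ_mk]
  calc ∑ i ∈ Finset.range (n + 1), ∑ j ∈ Finset.range (m + 1),
        Nat.choose n i * Nat.choose m j * Nat.choose (i + j) n
      = ∑ a ∈ Finset.range (n + 1),
          (∑ i ∈ Finset.range (n + 1), Nat.choose n i * Nat.choose i a) *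
          (∑ j ∈ Finset.range (m + 1), Nat.choose m j * Nat.choose j (n - a)) := by
        simp_rw [expand, Finset.mul_sum]
        have step1 :
            (∑ i ∈ Finset.range (n + 1), ∑ j ∈ Finset.range (m + 1),
                ∑ a ∈ Finset.range (n + 1),
                  Nat.choose n i * Nat.choose m j * (Nat.choose i a * Nat.choose j (n - a)))
            = ∑ i ∈ Finset.range (n + 1), ∑ a ∈ Finset.range (n + 1),
                ∑ j ∈ Finset.range (m + 1),
                  Nat.choose n i * Nat.choose m j * (Nat.choose i a * Nat.choose j (n - a)) :=
          Finset.sum_congr rfl fun i _ => Finset.sum_comm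
        rw [step1, Finset.sum_comm]
        refine Finset.sum_congr rfl fun a _ => ?_
        conv_rhs => rw [← Finset.mul_sum, Finset.sum_mul_sum]
        exact Finset.sum_congr rfl fun i _ => Finset.sum_congr rfl fun j _ => by ring
    _ = ∑ a ∈ Finset.range (n + 1),
          (Nat.choose n a * 2 ^ (n - a)) * (Nat.choose m (n - a) * 2 ^ (m - (n - a))) := by
        simp_rw [aux_sum_choose]
    _ = ∑ a ∈ Finset.range (n + 1),
          (Nat.choose n a * Nat.choose m (n - a)) * 2 ^ m := by
        refine Finset.sum_congr rfl fun a _ => ?_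
        rcases le_or_gt (n - a) m with h | h
        · have : 2 ^ (n - a) * 2 ^ (m - (n - a)) = 2 ^ m := by
            rw [← pow_add]; congr 1; omega
          calc Nat.choose n a * 2 ^ (n - a) * (Nat.choose m (n - a) * 2 ^ (m - (n - a)))
              = Nat.choose n a * Nat.choose m (n - a) *
                  (2 ^ (n - a) * 2 ^ (m - (n - a))) := by ring
            _ = _ := by rw [this]
        · simp [Nat.choose_eq_zero_of_lt h]
    _ = Nat.choose (n + m) n * 2 ^ m := by
        rw [Nat.add_choose_eq, Finset.Nat.sum_antidiagonal_eq_sum_range_succ_mk,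
          Finset.sum_mul]
end

section
/- For every positive integer n, ∑_{0 ≤ i < j ≤ n} C(n, i) * C(n, j) * C(i+j, n) = ∑_{0 ≤ i < j ≤ n} C(n, i) * C(n, j)^2, where both sums range over pairs of integers (i, j) with 0 ≤ i < j ≤ n. -/
open Finset

-- pointwise trinomial with reflection
lemma ptw (n k i : ℕ) (hk : k ≤ n) (hi : i ≤ n) :
    Nat.choose n i * Nat.choose i (n - k) = Nat.choose n k * Nat.choose k (n - i) := by
  rcases le_or_gt (n - k) i with h | h
  · rw [Nat.choose_mul h]
    have h1 : n - (n - k) = k := by omega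
    have h2 : Nat.choose k (i - (n - k)) = Nat.choose k (n - i) := by
      have h3 : i - (n - k) ≤ k := by omega
      rw [← Nat.choose_symm h3]
      congr 1
      omega
    rw [h1, Nat.choose_symm hk, h2]
  · rw [Nat.choose_eq_zero_of_lt h, Nat.choose_eq_zero_of_lt (by omega : k < n - i)]
    simp

-- Vandermonde in range form: ∑ C(n-k,i)C(k,i) = C(n,k)
lemma vand_range (n k : ℕ) (hk : k ≤ n) :
    ∑ i ∈ range (n + 1), Nat.choose (n - k) i * Nat.choose k i = Nat.choose n k := by
  have h := Nat.add_choose_eq (n - k) k k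
  rw [Finset.Nat.sum_antidiagonal_eq_sum_range_succ_mk] at h
  have h1 : n - k + k = n := by omega
  rw [h1] at h
  rw [h]
  have h2 : ∑ i ∈ range (n + 1), Nat.choose (n - k) i * Nat.choose k i
      = ∑ i ∈ range (k + 1), Nat.choose (n - k) i * Nat.choose k i := by
    symm
    apply Finset.sum_subset (Finset.range_subset_range.mpr (by omega))
    intro i _ hi
    simp only [mem_range, not_lt] at hi
    rw [Nat.choose_eq_zero_of_lt (by omega : k < i), mul_zero]
  rw [h2]
  apply Finset.sum_congr rfl
  intro i hi
  simp only [mem_range] at hi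
  rw [← Nat.choose_symm (by omega : i ≤ k)]

-- ∑ C(n,i)C(i,k) = C(n,k) * 2^(n-k)
lemma sum_choose_choose (n k : ℕ) (hk : k ≤ n) :
    ∑ i ∈ range (n + 1), Nat.choose n i * Nat.choose i k
      = Nat.choose n k * 2 ^ (n - k) := by
  have step : ∀ i ∈ range (n + 1), Nat.choose n i * Nat.choose i k
      = Nat.choose n k * Nat.choose (n - k) (n - i) := by
    intro i hi
    simp only [mem_range] at hi
    have := ptw n (n - k) i (by omega) (by omega)
    have h1 : n - (n - k) = k := by omega
    rw [h1] at this
    rw [this, Nat.choose_symm (by omega)]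
  rw [Finset.sum_congr rfl step, ← Finset.mul_sum]
  congr 1
  have hrefl : ∑ i ∈ range (n + 1), Nat.choose (n - k) (n - i)
      = ∑ i ∈ range (n + 1), Nat.choose (n - k) i := by
    have := Finset.sum_range_reflect (fun i => Nat.choose (n - k) i) (n + 1)
    rw [← this]
    apply Finset.sum_congr rfl
    intro i hi
    simp only [mem_range] at hi
    rfl
  rw [hrefl]
  rw [show ∑ i ∈ range (n + 1), Nat.choose (n - k) i
      = ∑ i ∈ range (n - k + 1), Nat.choose (n - k) i from
    (Finset.sum_subset (Finset.range_subset_range.mpr (by omega))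
      (fun i _ hi => Nat.choose_eq_zero_of_lt (by simp only [mem_range, not_lt] at hi; omega))).symm]
  exact Nat.sum_range_choose (n - k)

-- diagonal inner identity
lemma diag_inner (n k : ℕ) (hk : k ≤ n) :
    ∑ i ∈ range (n + 1),
        Nat.choose n i * Nat.choose i k * (Nat.choose n i * Nat.choose i (n - k))
      = Nat.choose n k ^ 3 := by
  have step : ∀ i ∈ range (n + 1),
      Nat.choose n i * Nat.choose i k * (Nat.choose n i * Nat.choose i (n - k))
        = Nat.choose n k ^ 2 * (Nat.choose (n - k) (n - i) * Nat.choose k (n - i)) := by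
    intro i hi
    simp only [mem_range] at hi
    have h1 := ptw n (n - k) i (by omega) (by omega)
    rw [show n - (n - k) = k from by omega] at h1
    have h2 := ptw n k i hk (by omega)
    rw [h1, h2, Nat.choose_symm hk]
    ring
  rw [Finset.sum_congr rfl step, ← Finset.mul_sum]
  have hrefl : ∑ i ∈ range (n + 1), Nat.choose (n - k) (n - i) * Nat.choose k (n - i)
      = ∑ i ∈ range (n + 1), Nat.choose (n - k) i * Nat.choose k i := by
    have := Finset.sum_range_reflect (fun i => Nat.choose (n - k) i * Nat.choose k i) (n + 1)
    rw [← this]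
    apply Finset.sum_congr rfl
    intro i hi
    simp only [mem_range] at hi
    rw [show n + 1 - 1 - i = n - i from by omega]
  rw [hrefl, vand_range n k hk]
  ring

-- triangle decomposition of a full square sum
lemma tri_decomp (N : ℕ) (f : ℕ → ℕ → ℕ) :
    ∑ j ∈ range N, ∑ i ∈ range N, f i j
      = (∑ j ∈ range N, ∑ i ∈ range j, f i j)
        + ((∑ j ∈ range N, ∑ i ∈ range j, f j i) + ∑ i ∈ range N, f i i) := by
  have split : ∀ j ∈ range N,
      ∑ i ∈ range N, f i j
        = (∑ i ∈ range j, f i j) + ∑ i ∈ Ico j N, f i j := by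
    intro j hj
    simp only [mem_range] at hj
    simp only [range_eq_Ico]
    exact (Finset.sum_Ico_consecutive _ (Nat.zero_le j) (by omega)).symm
  rw [Finset.sum_congr rfl split, Finset.sum_add_distrib]
  congr 1
  have h := Finset.sum_Ico_Ico_comm 0 N (fun i j => f j i)
  simp only [← range_eq_Ico] at h
  rw [h]
  rw [← Finset.sum_add_distrib]
  apply Finset.sum_congr rfl
  intro j _
  rw [Finset.sum_range_succ]

-- reflection symmetry for the RHS triangle
lemma refl_tri (n : ℕ) :
    ∑ j ∈ range (n + 1), ∑ i ∈ range j, Nat.choose n j * Nat.choose n i ^ 2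
      = ∑ j ∈ range (n + 1), ∑ i ∈ range j, Nat.choose n i * Nat.choose n j ^ 2 := by
  rw [Finset.sum_sigma', Finset.sum_sigma']
  refine Finset.sum_nbij' (fun p => ⟨n - p.2, n - p.1⟩) (fun p => ⟨n - p.2, n - p.1⟩)
    ?_ ?_ ?_ ?_ ?_
  · intro p hp
    simp only [Finset.mem_sigma, mem_range] at hp ⊢
    omega
  · intro p hp
    simp only [Finset.mem_sigma, mem_range] at hp ⊢
    omega
  · rintro ⟨a, b⟩ hp
    simp only [Finset.mem_sigma, mem_range] at hp
    simp only [Sigma.mk.inj_iff]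
    exact ⟨by omega, heq_of_eq (by omega)⟩
  · rintro ⟨a, b⟩ hp
    simp only [Finset.mem_sigma, mem_range] at hp
    simp only [Sigma.mk.inj_iff]
    exact ⟨by omega, heq_of_eq (by omega)⟩
  · rintro ⟨a, b⟩ hp
    simp only [Finset.mem_sigma, mem_range] at hp
    dsimp only
    rw [Nat.choose_symm (by omega : a ≤ n), Nat.choose_symm (by omega : b ≤ n)]
    try ring

lemma full_eq (n : ℕ) :
    ∑ j ∈ range (n + 1), ∑ i ∈ range (n + 1),
        Nat.choose n i * Nat.choose n j * Nat.choose (i + j) n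
      = ∑ j ∈ range (n + 1), ∑ i ∈ range (n + 1),
          Nat.choose n i * Nat.choose n j ^ 2 := by
  calc ∑ j ∈ range (n + 1), ∑ i ∈ range (n + 1),
        Nat.choose n i * Nat.choose n j * Nat.choose (i + j) n
      = ∑ j ∈ range (n + 1), ∑ i ∈ range (n + 1), ∑ k ∈ range (n + 1),
          (Nat.choose n i * Nat.choose i k) * (Nat.choose n j * Nat.choose j (n - k)) := by
        refine Finset.sum_congr rfl fun j _ => Finset.sum_congr rfl fun i _ => ?_
        rw [Nat.add_choose_eq i j n, Finset.Nat.sum_antidiagonal_eq_sum_range_succ_mk,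
          Finset.mul_sum]
        exact Finset.sum_congr rfl fun k _ => by ring
    _ = ∑ k ∈ range (n + 1), ∑ j ∈ range (n + 1), ∑ i ∈ range (n + 1),
          (Nat.choose n i * Nat.choose i k) * (Nat.choose n j * Nat.choose j (n - k)) := by
        exact Eq.trans (Finset.sum_congr rfl fun j _ => Finset.sum_comm) Finset.sum_comm
    _ = ∑ k ∈ range (n + 1),
          (∑ i ∈ range (n + 1), Nat.choose n i * Nat.choose i k)
            * ∑ j ∈ range (n + 1), Nat.choose n j * Nat.choose j (n - k) := by
        refine Finset.sum_congr rfl fun k _ => ?_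
        rw [Finset.sum_comm, Finset.sum_mul]
        exact Finset.sum_congr rfl fun i _ => (Finset.mul_sum _ _ _).symm
    _ = ∑ k ∈ range (n + 1), 2 ^ n * Nat.choose n k ^ 2 := by
        refine Finset.sum_congr rfl fun k hk => ?_
        simp only [mem_range] at hk
        rw [sum_choose_choose n k (by omega), sum_choose_choose n (n - k) (by omega),
          show n - (n - k) = k from by omega, Nat.choose_symm (by omega : k ≤ n),
          show (2 : ℕ) ^ n = 2 ^ (n - k) * 2 ^ k from by rw [← pow_add]; congr 1; omega]
        ring
    _ = ∑ j ∈ range (n + 1), ∑ i ∈ range (n + 1),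
          Nat.choose n i * Nat.choose n j ^ 2 := by
        refine Finset.sum_congr rfl fun j _ => ?_
        rw [← Finset.sum_mul, Nat.sum_range_choose]

lemma diag_eq (n : ℕ) :
    ∑ i ∈ range (n + 1), Nat.choose n i * Nat.choose n i * Nat.choose (i + i) n
      = ∑ i ∈ range (n + 1), Nat.choose n i * Nat.choose n i ^ 2 := by
  calc ∑ i ∈ range (n + 1), Nat.choose n i * Nat.choose n i * Nat.choose (i + i) n
      = ∑ i ∈ range (n + 1), ∑ k ∈ range (n + 1),
          Nat.choose n i * Nat.choose i k * (Nat.choose n i * Nat.choose i (n - k)) := by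
        refine Finset.sum_congr rfl fun i _ => ?_
        rw [Nat.add_choose_eq i i n, Finset.Nat.sum_antidiagonal_eq_sum_range_succ_mk,
          Finset.mul_sum]
        exact Finset.sum_congr rfl fun k _ => by ring
    _ = ∑ k ∈ range (n + 1), ∑ i ∈ range (n + 1),
          Nat.choose n i * Nat.choose i k * (Nat.choose n i * Nat.choose i (n - k)) :=
        Finset.sum_comm
    _ = ∑ k ∈ range (n + 1), Nat.choose n k ^ 3 := by
        refine Finset.sum_congr rfl fun k hk => ?_
        simp only [mem_range] at hk
        exact diag_inner n k (by omega)
    _ = ∑ i ∈ range (n + 1), Nat.choose n i * Nat.choose n i ^ 2 :=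
        Finset.sum_congr rfl fun i _ => by ring

theorem stmt_10 (n : ℕ) (hn : 0 < n) :
    ∑ j ∈ Finset.range (n + 1), ∑ i ∈ Finset.range j,
        Nat.choose n i * Nat.choose n j * Nat.choose (i + j) n =
    ∑ j ∈ Finset.range (n + 1), ∑ i ∈ Finset.range j,
        Nat.choose n i * (Nat.choose n j) ^ 2 := by
  have h1 := full_eq n
  rw [tri_decomp (n + 1) (fun i j => Nat.choose n i * Nat.choose n j * Nat.choose (i + j) n),
    tri_decomp (n + 1) (fun i j => Nat.choose n i * Nat.choose n j ^ 2)] at h1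
  have eg : ∑ j ∈ range (n + 1), ∑ i ∈ range j,
      Nat.choose n j * Nat.choose n i * Nat.choose (j + i) n
      = ∑ j ∈ range (n + 1), ∑ i ∈ range j,
        Nat.choose n i * Nat.choose n j * Nat.choose (i + j) n := by
    refine Finset.sum_congr rfl fun j _ => Finset.sum_congr rfl fun i _ => ?_
    rw [add_comm j i]; ring
  rw [eg, refl_tri n, diag_eq n] at h1
  omega
end

section
/- For every positive integer n, ∑_{i=0}^{n} C(n, i)^2 * C(2i, n) = ∑_{i=0}^{n} C(n, i)^3. -/
open Finset

lemma keyB {n i j : ℕ} (hi : i ≤ n) (hj : j ≤ n) :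
    n.choose i * i.choose j = n.choose j * (n - j).choose (n - i) := by
  rcases le_or_gt j i with h | h
  · rw [Nat.choose_mul h]
    congr 1
    have h1 : n - i ≤ n - j := by omega
    rw [← Nat.choose_symm h1]
    congr 1
    omega
  · have h1 : i.choose j = 0 := Nat.choose_eq_zero_of_lt h
    have h2 : (n - j).choose (n - i) = 0 := Nat.choose_eq_zero_of_lt (by omega)
    rw [h1, h2, mul_zero, mul_zero]

-- Vandermonde in "equal lower index" form
lemma keyA {a b n : ℕ} (hb : b ≤ n) :
    ∑ k ∈ range (n + 1), a.choose k * b.choose k = (a + b).choose b := by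
  rw [Nat.add_choose_eq, Finset.Nat.sum_antidiagonal_eq_sum_range_succ_mk]
  rw [← Finset.sum_subset (Finset.range_subset_range.2 (by omega : b + 1 ≤ n + 1))]
  · apply Finset.sum_congr rfl
    intro k hk
    simp only [Finset.mem_range] at hk
    congr 1
    rw [← Nat.choose_symm (by omega : k ≤ b)]
  · intro k _ hk
    simp only [Finset.mem_range, not_lt] at hk
    rw [Nat.choose_eq_zero_of_lt (by omega : b < k), mul_zero]

theorem stmt_11 (n : ℕ) (hn : 0 < n) :
    ∑ i ∈ Finset.range (n + 1), (Nat.choose n i) ^ 2 * Nat.choose (2 * i) n =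
    ∑ i ∈ Finset.range (n + 1), (Nat.choose n i) ^ 3 := by
  calc
    ∑ i ∈ range (n + 1), (n.choose i) ^ 2 * (2 * i).choose n
      = ∑ i ∈ range (n + 1), ∑ jl ∈ Finset.HasAntidiagonal.antidiagonal n,
          (n.choose jl.1 * (n - jl.1).choose (n - i)) *
          (n.choose jl.2 * (n - jl.2).choose (n - i)) := by
        refine Finset.sum_congr rfl fun i hi => ?_
        simp only [Finset.mem_range] at hi
        rw [two_mul, Nat.add_choose_eq, Finset.mul_sum]
        refine Finset.sum_congr rfl fun jl hjl => ?_
        have h1 := Finset.HasAntidiagonal.mem_antidiagonal.1 hjl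
        rw [← keyB (by omega) (by omega : jl.1 ≤ n),
            ← keyB (by omega) (by omega : jl.2 ≤ n)]
        ring
    _ = ∑ jl ∈ Finset.HasAntidiagonal.antidiagonal n, (n.choose jl.1 * n.choose jl.2) *
          ∑ i ∈ range (n + 1), (n - jl.1).choose (n - i) * (n - jl.2).choose (n - i) := by
        rw [Finset.sum_comm]
        refine Finset.sum_congr rfl fun jl _ => ?_
        rw [Finset.mul_sum]
        refine Finset.sum_congr rfl fun i _ => ?_
        ring
    _ = ∑ jl ∈ Finset.HasAntidiagonal.antidiagonal n, (n.choose jl.1) ^ 3 := by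
        refine Finset.sum_congr rfl fun jl hjl => ?_
        have h1 := Finset.HasAntidiagonal.mem_antidiagonal.1 hjl
        have hr := Finset.sum_range_reflect
          (fun k => (n - jl.1).choose k * (n - jl.2).choose k) (n + 1)
        simp only [Nat.add_sub_cancel] at hr
        rw [hr, keyA (by omega : n - jl.2 ≤ n)]
        have h2 : (n - jl.1) + (n - jl.2) = n := by omega
        have h3 : n - jl.2 = jl.1 := by omega
        have h4 : jl.2 = n - jl.1 := by omega
        rw [h2, h3, h4, Nat.choose_symm (by omega : jl.1 ≤ n)]
        ring
    _ = ∑ i ∈ range (n + 1), (n.choose i) ^ 3 := by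
        rw [Finset.Nat.sum_antidiagonal_eq_sum_range_succ_mk]
end

section
/- Let a(n) = ∑_{i=0}^{n} C(n, i)^2 * C(2i, n). Then for every nonnegative integer n, (n+2)^2 * a(n+2) - (7n^2 + 21n + 16) * a(n+1) - 8 * (n+1)^2 * a(n) = 0. -/
/-- `a n = ∑_{i=0}^{n} C(n, i)^2 * C(2i, n)`, viewed in `ℤ`. -/
def a (n : ℕ) : ℤ :=
  ∑ i ∈ Finset.range (n + 1), ((Nat.choose n i : ℤ)) ^ 2 * (Nat.choose (2 * i) n : ℤ)

/-- companion sequence `B n = ∑ C(n,i)^2 C(2i, n+1)` -/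
def bseq (n : ℕ) : ℤ :=
  ∑ i ∈ Finset.range (n + 1), ((Nat.choose n i : ℤ)) ^ 2 * (Nat.choose (2 * i) (n + 1) : ℤ)

/-- telescoping certificate for the first relation -/
def T1 (n : ℕ) : ℕ → ℤ
  | 0 => 0
  | (i + 1) =>
      ((Nat.choose n i : ℤ)) ^ 2 *
        ((6 * i + 6) * (Nat.choose (2 * i) (n + 1) : ℤ) -
          (10 * i + 2) * (Nat.choose (2 * i) n : ℤ))

/-- telescoping certificate for the second relation -/
def T2 (n : ℕ) : ℕ → ℤ
  | 0 => 0
  | (i + 1) =>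
      ((Nat.choose n i : ℤ)) ^ 2 *
        ((2 * i + 2) * (Nat.choose (2 * i) (n + 1) : ℤ) -
          (6 * i + 2) * (Nat.choose (2 * i) n : ℤ))

/-- absorption identity over ℚ : (k+1) C(m,k+1) = (m-k) C(m,k). -/
lemma q_absorb (m k : ℕ) :
    ((k : ℚ) + 1) * (Nat.choose m (k + 1) : ℚ) = ((m : ℚ) - k) * (Nat.choose m k : ℚ) := by
  rcases le_or_gt (k + 1) m with h | h
  · have := Nat.choose_succ_right_eq m k
    have h' : (((m.choose (k+1)) * (k+1) : ℕ) : ℚ) = ((m.choose k * (m - k) : ℕ) : ℚ) := by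
      exact_mod_cast congrArg (Nat.cast : ℕ → ℚ) this
    push_cast [Nat.cast_sub (by omega : k ≤ m)] at h'
    linarith [h']
  · rcases Nat.lt_or_ge m (k+1) with h2 | h2
    · rcases Nat.eq_or_lt_of_le (Nat.lt_succ_iff.mp h2) with rfl | h3
      · simp [Nat.choose_succ_self]
      · rw [Nat.choose_eq_zero_of_lt h3, Nat.choose_eq_zero_of_lt (by omega)]
        simp
    · omega

/-- top-shift absorption over ℚ : (m+1-k) C(m+1,k) = (m+1) C(m,k). -/
lemma q_absorb2 (m k : ℕ) :
    ((m : ℚ) + 1 - k) * (Nat.choose (m + 1) k : ℚ) = ((m : ℚ) + 1) * (Nat.choose m k : ℚ) := by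
  rcases le_or_gt k (m + 1) with h | h
  · have := Nat.choose_mul_succ_eq m k
    have h' : (((m.choose k) * (m+1) : ℕ) : ℚ) = (((m+1).choose k * (m + 1 - k) : ℕ) : ℚ) := by
      exact_mod_cast congrArg (Nat.cast : ℕ → ℚ) this
    push_cast [Nat.cast_sub h] at h'
    linarith [h']
  · rw [Nat.choose_eq_zero_of_lt h, Nat.choose_eq_zero_of_lt (by omega)]
    simp

/-- generic rational identity behind the first local certificate -/
lemma key1 (N I A C D X Y B BP DP E : ℚ)
    (h1 : E = A + C) (h2 : (I + 1) * A = (N - I) * C)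
    (h3 : (2 * I + 1 - N) * X = (2 * I + 1) * D)
    (h4 : (2 * I + 2 - N) * B = (2 * I + 2) * X)
    (h5 : (N + 1) * Y = (2 * I + 1 - N) * X)
    (h6 : BP = X + Y)
    (h7 : (N + 1) * DP = (2 * I - N) * D)
    (hn0 : N + 1 ≠ 0) (hi : I + 1 ≠ 0)
    (hn1 : 2 * I + 1 - N ≠ 0) (hn2 : 2 * I + 2 - N ≠ 0) :
    (N + 1) * E ^ 2 * BP - (5 * N + 2) * A ^ 2 * B - 6 * N * A ^ 2 * BP =
      (6 * I + 12) * A ^ 2 * BP - (10 * I + 12) * A ^ 2 * B -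
        (6 * I + 6) * C ^ 2 * DP + (10 * I + 2) * C ^ 2 * D := by
  have hA : A = (N - I) * C / (I + 1) := by rw [eq_div_iff hi]; linear_combination h2
  have hX : X = (2 * I + 1) * D / (2 * I + 1 - N) := by
    rw [eq_div_iff hn1]; linear_combination h3
  have hB : B = (2 * I + 2) * X / (2 * I + 2 - N) := by
    rw [eq_div_iff hn2]; linear_combination h4
  have hY : Y = (2 * I + 1 - N) * X / (N + 1) := by
    rw [eq_div_iff hn0]; linear_combination h5
  have hDP : DP = (2 * I - N) * D / (N + 1) := by
    rw [eq_div_iff hn0]; linear_combination h7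
  subst h1 h6 hB hY hDP hX hA
  have hn1' : I * 2 + 1 - N ≠ 0 := by intro h; apply hn1; linarith
  have hn2'' : (I + 1) * 2 - N ≠ 0 := by intro h; apply hn2; linarith
  field_simp
  ring

/-- generic rational identity behind the second local certificate -/
lemma key2 (N I A C D X Y B BP B2 DP E : ℚ)
    (h1 : E = A + C) (h2 : (I + 1) * A = (N - I) * C)
    (h3 : (2 * I + 1 - N) * X = (2 * I + 1) * D)
    (h4 : (2 * I + 2 - N) * B = (2 * I + 2) * X)
    (h5 : (N + 1) * Y = (2 * I + 1 - N) * X)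
    (h6 : BP = X + Y)
    (h7 : (N + 1) * DP = (2 * I - N) * D)
    (h8 : (N + 2) * B2 = (2 * I + 1 - N) * BP)
    (hn0 : N + 1 ≠ 0) (hn00 : N + 2 ≠ 0) (hi : I + 1 ≠ 0)
    (hn1 : 2 * I + 1 - N ≠ 0) (hn2 : 2 * I + 2 - N ≠ 0) :
    (N + 2) * E ^ 2 * B2 - (3 * N + 2) * A ^ 2 * B - 2 * N * A ^ 2 * BP =
      (2 * I + 4) * A ^ 2 * BP - (6 * I + 8) * A ^ 2 * B -
        (2 * I + 2) * C ^ 2 * DP + (6 * I + 2) * C ^ 2 * D := by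
  have hA : A = (N - I) * C / (I + 1) := by rw [eq_div_iff hi]; linear_combination h2
  have hX : X = (2 * I + 1) * D / (2 * I + 1 - N) := by
    rw [eq_div_iff hn1]; linear_combination h3
  have hB : B = (2 * I + 2) * X / (2 * I + 2 - N) := by
    rw [eq_div_iff hn2]; linear_combination h4
  have hY : Y = (2 * I + 1 - N) * X / (N + 1) := by
    rw [eq_div_iff hn0]; linear_combination h5
  have hDP : DP = (2 * I - N) * D / (N + 1) := by
    rw [eq_div_iff hn0]; linear_combination h7
  have hB2 : B2 = (2 * I + 1 - N) * BP / (N + 2) := by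
    rw [eq_div_iff hn00]; linear_combination h8
  subst h1 h6 hB2 hB hY hDP hX hA
  have hn2' : 2 * (I + 1) - N ≠ 0 := by intro h; apply hn2; linarith
  field_simp
  ring

-- local lemma 1
lemma loc1 (n i : ℕ) :
    ((n : ℤ) + 1) * (Nat.choose (n+1) i : ℤ) ^ 2 * (Nat.choose (2*i) (n+1) : ℤ)
      - (5 * n + 2) * (Nat.choose n i : ℤ) ^ 2 * (Nat.choose (2*i) n : ℤ)
      - 6 * n * (Nat.choose n i : ℤ) ^ 2 * (Nat.choose (2*i) (n+1) : ℤ)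
      = T1 n (i+1) - T1 n i := by
  cases i with
  | zero =>
      simp only [T1, Nat.mul_zero, Nat.choose_zero_right]
      cases n with
      | zero => norm_num
      | succ m => simp [Nat.choose_zero_succ, Nat.choose_succ_succ]
  | succ j =>
      -- rewrite 2*(j+1) = 2*j+2
      have e2 : 2 * (j + 1) = 2 * j + 2 := by ring
      rw [e2]
      simp only [T1]
      rw [e2]
      by_cases hc1 : n = 2 * j + 1
      · subst hc1
        have hz1 : Nat.choose (2*j) (2*j+1) = 0 := Nat.choose_eq_zero_of_lt (by omega)
        have hz2 : Nat.choose (2*j) (2*j+1+1) = 0 := Nat.choose_eq_zero_of_lt (by omega)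
        have hb : Nat.choose (2*j+2) (2*j+1) = 2*j+2 := by
          rw [← Nat.choose_symm (by omega : 2*j+1 ≤ 2*j+2)]
          norm_num
        have hbp : Nat.choose (2*j+2) (2*j+1+1) = 1 := by
          have : 2*j+1+1 = 2*j+2 := by omega
          rw [this, Nat.choose_self]
        have hac : Nat.choose (2*j+1) (j+1) = Nat.choose (2*j+1) j := by
          rw [← Nat.choose_symm (by omega : j+1 ≤ 2*j+1)]
          congr 1
          omega
        have hpas : Nat.choose (2*j+1+1) (j+1) = Nat.choose (2*j+1) j + Nat.choose (2*j+1) (j+1) :=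
          Nat.choose_succ_succ (2*j+1) j
        rw [hz1, hz2, hb, hbp, hpas, hac]
        push_cast
        ring
      · by_cases hc2 : n = 2 * j + 2
        · subst hc2
          have hz1 : Nat.choose (2*j) (2*j+2) = 0 := Nat.choose_eq_zero_of_lt (by omega)
          have hz2 : Nat.choose (2*j) (2*j+2+1) = 0 := Nat.choose_eq_zero_of_lt (by omega)
          have hbp : Nat.choose (2*j+2) (2*j+2+1) = 0 := Nat.choose_eq_zero_of_lt (by omega)
          have hb : Nat.choose (2*j+2) (2*j+2) = 1 := Nat.choose_self _
          rw [hz1, hz2, hbp, hb]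
          push_cast
          ring
        · -- generic case via key1 over ℚ
          have hn1 : (2 * (j:ℚ) + 1 - n) ≠ 0 := by
            intro h
            apply hc1
            have : (n:ℚ) = 2*j+1 := by linarith
            exact_mod_cast this
          have hn2 : (2 * (j:ℚ) + 2 - n) ≠ 0 := by
            intro h
            apply hc2
            have : (n:ℚ) = 2*j+2 := by linarith
            exact_mod_cast this
          have hn0 : ((n:ℚ) + 1) ≠ 0 := by positivity
          have hi : ((j:ℚ) + 1) ≠ 0 := by positivity
          have h1 : (Nat.choose (n+1) (j+1) : ℚ) =
              (Nat.choose n (j+1) : ℚ) + (Nat.choose n j : ℚ) := by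
            rw [Nat.choose_succ_succ' n j]
            push_cast
            ring
          have h2 := q_absorb n j
          have h3 : (2*(j:ℚ)+1-n) * (Nat.choose (2*j+1) n : ℚ)
              = (2*(j:ℚ)+1) * (Nat.choose (2*j) n : ℚ) := by
            have := q_absorb2 (2*j) n
            push_cast at this ⊢
            linear_combination this
          have h4 : (2*(j:ℚ)+2-n) * (Nat.choose (2*j+2) n : ℚ)
              = (2*(j:ℚ)+2) * (Nat.choose (2*j+1) n : ℚ) := by
            have := q_absorb2 (2*j+1) n
            push_cast at this ⊢
            linear_combination this
          have h5 : ((n:ℚ)+1) * (Nat.choose (2*j+1) (n+1) : ℚ)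
              = (2*(j:ℚ)+1-n) * (Nat.choose (2*j+1) n : ℚ) := by
            have := q_absorb (2*j+1) n
            push_cast at this ⊢
            linear_combination this
          have h6 : (Nat.choose (2*j+2) (n+1) : ℚ)
              = (Nat.choose (2*j+1) n : ℚ) + (Nat.choose (2*j+1) (n+1) : ℚ) := by
            rw [Nat.choose_succ_succ' (2*j+1) n]
            push_cast
            ring
          have h7 : ((n:ℚ)+1) * (Nat.choose (2*j) (n+1) : ℚ)
              = (2*(j:ℚ)-n) * (Nat.choose (2*j) n : ℚ) := by
            have := q_absorb (2*j) n
            push_cast at this ⊢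
            linear_combination this
          have K := key1 (n:ℚ) (j:ℚ) (Nat.choose n (j+1) : ℚ) (Nat.choose n j : ℚ)
            (Nat.choose (2*j) n : ℚ) (Nat.choose (2*j+1) n : ℚ) (Nat.choose (2*j+1) (n+1) : ℚ)
            (Nat.choose (2*j+2) n : ℚ) (Nat.choose (2*j+2) (n+1) : ℚ)
            (Nat.choose (2*j) (n+1) : ℚ) (Nat.choose (n+1) (j+1) : ℚ)
            h1 h2 h3 h4 h5 h6 h7 hn0 hi hn1 hn2
          qify
          push_cast at K ⊢
          linear_combination K

lemma loc2 (n i : ℕ) :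
    ((n : ℤ) + 2) * (Nat.choose (n+1) i : ℤ) ^ 2 * (Nat.choose (2*i) (n+2) : ℤ)
      - (3 * n + 2) * (Nat.choose n i : ℤ) ^ 2 * (Nat.choose (2*i) n : ℤ)
      - 2 * n * (Nat.choose n i : ℤ) ^ 2 * (Nat.choose (2*i) (n+1) : ℤ)
      = T2 n (i+1) - T2 n i := by
  cases i with
  | zero =>
      simp only [T2, Nat.mul_zero, Nat.choose_zero_right]
      cases n with
      | zero => norm_num
      | succ m => simp [Nat.choose_zero_succ, Nat.choose_succ_succ]
  | succ j =>
      have e2 : 2 * (j + 1) = 2 * j + 2 := by ring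
      rw [e2]
      simp only [T2]
      rw [e2]
      by_cases hc1 : n = 2 * j + 1
      · subst hc1
        have hz1 : Nat.choose (2*j) (2*j+1) = 0 := Nat.choose_eq_zero_of_lt (by omega)
        have hz2 : Nat.choose (2*j) (2*j+1+1) = 0 := Nat.choose_eq_zero_of_lt (by omega)
        have hb2 : Nat.choose (2*j+2) (2*j+1+2) = 0 := Nat.choose_eq_zero_of_lt (by omega)
        have hb : Nat.choose (2*j+2) (2*j+1) = 2*j+2 := by
          rw [← Nat.choose_symm (by omega : 2*j+1 ≤ 2*j+2)]
          norm_num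
        have hbp : Nat.choose (2*j+2) (2*j+1+1) = 1 := by
          have : 2*j+1+1 = 2*j+2 := by omega
          rw [this, Nat.choose_self]
        rw [hz1, hz2, hb2, hb, hbp]
        push_cast
        ring
      · by_cases hc2 : n = 2 * j + 2
        · subst hc2
          have hz1 : Nat.choose (2*j) (2*j+2) = 0 := Nat.choose_eq_zero_of_lt (by omega)
          have hz2 : Nat.choose (2*j) (2*j+2+1) = 0 := Nat.choose_eq_zero_of_lt (by omega)
          have hbp : Nat.choose (2*j+2) (2*j+2+1) = 0 := Nat.choose_eq_zero_of_lt (by omega)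
          have hb2 : Nat.choose (2*j+2) (2*j+2+2) = 0 := Nat.choose_eq_zero_of_lt (by omega)
          have hb : Nat.choose (2*j+2) (2*j+2) = 1 := Nat.choose_self _
          rw [hz1, hz2, hbp, hb, hb2]
          push_cast
          ring
        · have hn1 : (2 * (j:ℚ) + 1 - n) ≠ 0 := by
            intro h
            apply hc1
            have : (n:ℚ) = 2*j+1 := by linarith
            exact_mod_cast this
          have hn2 : (2 * (j:ℚ) + 2 - n) ≠ 0 := by
            intro h
            apply hc2
            have : (n:ℚ) = 2*j+2 := by linarith
            exact_mod_cast this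
          have hn0 : ((n:ℚ) + 1) ≠ 0 := by positivity
          have hn00 : ((n:ℚ) + 2) ≠ 0 := by positivity
          have hi : ((j:ℚ) + 1) ≠ 0 := by positivity
          have h1 : (Nat.choose (n+1) (j+1) : ℚ) =
              (Nat.choose n (j+1) : ℚ) + (Nat.choose n j : ℚ) := by
            rw [Nat.choose_succ_succ' n j]
            push_cast
            ring
          have h2 := q_absorb n j
          have h3 : (2*(j:ℚ)+1-n) * (Nat.choose (2*j+1) n : ℚ)
              = (2*(j:ℚ)+1) * (Nat.choose (2*j) n : ℚ) := by
            have := q_absorb2 (2*j) n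
            push_cast at this ⊢
            linear_combination this
          have h4 : (2*(j:ℚ)+2-n) * (Nat.choose (2*j+2) n : ℚ)
              = (2*(j:ℚ)+2) * (Nat.choose (2*j+1) n : ℚ) := by
            have := q_absorb2 (2*j+1) n
            push_cast at this ⊢
            linear_combination this
          have h5 : ((n:ℚ)+1) * (Nat.choose (2*j+1) (n+1) : ℚ)
              = (2*(j:ℚ)+1-n) * (Nat.choose (2*j+1) n : ℚ) := by
            have := q_absorb (2*j+1) n
            push_cast at this ⊢
            linear_combination this
          have h6 : (Nat.choose (2*j+2) (n+1) : ℚ)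
              = (Nat.choose (2*j+1) n : ℚ) + (Nat.choose (2*j+1) (n+1) : ℚ) := by
            rw [Nat.choose_succ_succ' (2*j+1) n]
            push_cast
            ring
          have h7 : ((n:ℚ)+1) * (Nat.choose (2*j) (n+1) : ℚ)
              = (2*(j:ℚ)-n) * (Nat.choose (2*j) n : ℚ) := by
            have := q_absorb (2*j) n
            push_cast at this ⊢
            linear_combination this
          have h8 : ((n:ℚ)+2) * (Nat.choose (2*j+2) (n+2) : ℚ)
              = (2*(j:ℚ)+1-n) * (Nat.choose (2*j+2) (n+1) : ℚ) := by
            have := q_absorb (2*j+2) (n+1)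
            push_cast at this ⊢
            linear_combination this
          have K := key2 (n:ℚ) (j:ℚ) (Nat.choose n (j+1) : ℚ) (Nat.choose n j : ℚ)
            (Nat.choose (2*j) n : ℚ) (Nat.choose (2*j+1) n : ℚ) (Nat.choose (2*j+1) (n+1) : ℚ)
            (Nat.choose (2*j+2) n : ℚ) (Nat.choose (2*j+2) (n+1) : ℚ)
            (Nat.choose (2*j+2) (n+2) : ℚ)
            (Nat.choose (2*j) (n+1) : ℚ) (Nat.choose (n+1) (j+1) : ℚ)
            h1 h2 h3 h4 h5 h6 h7 h8 hn0 hn00 hi hn1 hn2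
          qify
          push_cast at K ⊢
          linear_combination K
lemma rel1 (n : ℕ) :
    ((n : ℤ) + 1) * a (n+1) - (5 * n + 2) * a n - 6 * n * bseq n = 0 := by
  have ha : a n = ∑ i ∈ Finset.range (n + 2),
      ((Nat.choose n i : ℤ)) ^ 2 * (Nat.choose (2 * i) n : ℤ) := by
    rw [a, Finset.sum_range_succ (n := n + 1)]
    simp [Nat.choose_succ_self]
  have hb : bseq n = ∑ i ∈ Finset.range (n + 2),
      ((Nat.choose n i : ℤ)) ^ 2 * (Nat.choose (2 * i) (n+1) : ℤ) := by
    rw [bseq, Finset.sum_range_succ (n := n + 1)]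
    simp [Nat.choose_succ_self]
  have key : ((n : ℤ) + 1) * a (n+1) - (5 * n + 2) * a n - 6 * n * bseq n
      = ∑ i ∈ Finset.range (n + 2), (T1 n (i+1) - T1 n i) := by
    rw [a, ha, hb, Finset.mul_sum, Finset.mul_sum, Finset.mul_sum,
      ← Finset.sum_sub_distrib, ← Finset.sum_sub_distrib]
    refine Finset.sum_congr rfl fun i _ => ?_
    rw [← loc1 n i]
    ring
  rw [key, Finset.sum_range_sub (T1 n)]
  have : T1 n (n+2) = ((Nat.choose n (n+1) : ℤ)) ^ 2 *
      ((6 * (n+1) + 6) * (Nat.choose (2 * (n+1)) (n + 1) : ℤ) -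
        (10 * (n+1) + 2) * (Nat.choose (2 * (n+1)) n : ℤ)) := rfl
  rw [this, Nat.choose_succ_self]
  simp [T1]

lemma rel2 (n : ℕ) :
    ((n : ℤ) + 2) * bseq (n+1) - (3 * n + 2) * a n - 2 * n * bseq n = 0 := by
  have ha : a n = ∑ i ∈ Finset.range (n + 2),
      ((Nat.choose n i : ℤ)) ^ 2 * (Nat.choose (2 * i) n : ℤ) := by
    rw [a, Finset.sum_range_succ (n := n + 1)]
    simp [Nat.choose_succ_self]
  have hb : bseq n = ∑ i ∈ Finset.range (n + 2),
      ((Nat.choose n i : ℤ)) ^ 2 * (Nat.choose (2 * i) (n+1) : ℤ) := by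
    rw [bseq, Finset.sum_range_succ (n := n + 1)]
    simp [Nat.choose_succ_self]
  have key : ((n : ℤ) + 2) * bseq (n+1) - (3 * n + 2) * a n - 2 * n * bseq n
      = ∑ i ∈ Finset.range (n + 2), (T2 n (i+1) - T2 n i) := by
    rw [bseq, ha, hb, Finset.mul_sum, Finset.mul_sum, Finset.mul_sum,
      ← Finset.sum_sub_distrib, ← Finset.sum_sub_distrib]
    refine Finset.sum_congr rfl fun i _ => ?_
    rw [← loc2 n i]
    ring
  rw [key, Finset.sum_range_sub (T2 n)]
  have : T2 n (n+2) = ((Nat.choose n (n+1) : ℤ)) ^ 2 *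
      ((2 * (n+1) + 2) * (Nat.choose (2 * (n+1)) (n + 1) : ℤ) -
        (6 * (n+1) + 2) * (Nat.choose (2 * (n+1)) n : ℤ)) := rfl
  rw [this, Nat.choose_succ_self]
  simp [T2]

theorem stmt_12 (n : ℕ) :
    ((n : ℤ) + 2) ^ 2 * a (n + 2) - (7 * (n : ℤ) ^ 2 + 21 * n + 16) * a (n + 1) -
      8 * ((n : ℤ) + 1) ^ 2 * a n = 0 := by
  have r1 := rel1 n
  have r1' := rel1 (n+1)
  have r2 := rel2 n
  push_cast at r1 r1' r2
  have e1 : n + 1 + 1 = n + 2 := by omega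
  rw [e1] at r1'
  linear_combination ((n:ℤ) + 2) * r1' + 6 * ((n:ℤ) + 1) * r2 - 2 * ((n:ℤ) + 1) * r1
end

section
/- For every nonnegative integer n, C(2n, n) * 2^n = 2 * ∑_{0 ≤ i < j ≤ n} C(n, i) * C(n, j)^2 + ∑_{i=0}^{n} C(n, i)^3, where the first sum on the right ranges over pairs of integers (i, j) with 0 ≤ i < j ≤ n. -/
open Finset

lemma sq_sum_choose (n : ℕ) :
    ∑ i ∈ range (n + 1), (Nat.choose n i) ^ 2 = Nat.choose (2 * n) n := by
  rw [two_mul, Nat.add_choose_eq, Finset.Nat.sum_antidiagonal_eq_sum_range_succ_mk]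
  refine Finset.sum_congr rfl fun i hi => ?_
  simp only [mem_range] at hi
  rw [Nat.choose_symm (by omega : i ≤ n), sq]

lemma strict_sum_symm (n : ℕ) :
    ∑ j ∈ range (n + 1), ∑ i ∈ range j, Nat.choose n j * (Nat.choose n i) ^ 2 =
    ∑ j ∈ range (n + 1), ∑ i ∈ range j, Nat.choose n i * (Nat.choose n j) ^ 2 := by
  rw [Finset.sum_sigma', Finset.sum_sigma']
  refine Finset.sum_nbij' (fun p => ⟨n - p.2, n - p.1⟩) (fun p => ⟨n - p.2, n - p.1⟩)
    ?_ ?_ ?_ ?_ ?_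
  · rintro ⟨j, i⟩ h
    simp only [Finset.mem_sigma, Finset.mem_range] at *
    omega
  · rintro ⟨j, i⟩ h
    simp only [Finset.mem_sigma, Finset.mem_range] at *
    omega
  · rintro ⟨j, i⟩ h
    simp only [Finset.mem_sigma, Finset.mem_range] at h
    have h1 : n - (n - i) = i := by omega
    have h2 : n - (n - j) = j := by omega
    simp [h1, h2]
  · rintro ⟨j, i⟩ h
    simp only [Finset.mem_sigma, Finset.mem_range] at h
    have h1 : n - (n - i) = i := by omega
    have h2 : n - (n - j) = j := by omega
    simp [h1, h2]
  · rintro ⟨j, i⟩ h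
    simp only [Finset.mem_sigma, Finset.mem_range] at h
    simp only
    rw [Nat.choose_symm (by omega : j ≤ n), Nat.choose_symm (by omega : i ≤ n)]

theorem stmt_16 (n : ℕ) :
    Nat.choose (2 * n) n * 2 ^ n =
    2 * (∑ j ∈ Finset.range (n + 1), ∑ i ∈ Finset.range j,
          Nat.choose n i * (Nat.choose n j) ^ 2) +
      ∑ i ∈ Finset.range (n + 1), (Nat.choose n i) ^ 3 := by
  have hall : ∑ j ∈ range (n + 1), ∑ i ∈ range (n + 1),
      Nat.choose n i * (Nat.choose n j) ^ 2 = Nat.choose (2 * n) n * 2 ^ n := by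
    simp only [← Finset.sum_mul, Nat.sum_range_choose, ← Finset.mul_sum]
    rw [sq_sum_choose, mul_comm]
  have hsplit : ∑ j ∈ range (n + 1), ∑ i ∈ range (n + 1),
      Nat.choose n i * (Nat.choose n j) ^ 2 =
      (∑ j ∈ range (n + 1), ∑ i ∈ range j, Nat.choose n i * (Nat.choose n j) ^ 2) +
      (∑ j ∈ range (n + 1), ∑ i ∈ range j, Nat.choose n j * (Nat.choose n i) ^ 2) +
      ∑ i ∈ range (n + 1), (Nat.choose n i) ^ 3 := by
    have key : ∀ j ∈ range (n + 1), ∑ i ∈ range (n + 1),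
        Nat.choose n i * (Nat.choose n j) ^ 2 =
        (∑ i ∈ range j, Nat.choose n i * (Nat.choose n j) ^ 2) +
        ((Nat.choose n j) ^ 3 +
         ∑ i ∈ Ico (j + 1) (n + 1), Nat.choose n i * (Nat.choose n j) ^ 2) := by
      intro j hj
      simp only [mem_range] at hj
      rw [Finset.range_eq_Ico,
        ← Finset.sum_Ico_consecutive _ (Nat.zero_le j) (by omega : j ≤ n + 1),
        ← Finset.sum_Ico_consecutive _ (by omega : j ≤ j + 1) (by omega : j + 1 ≤ n + 1),
        ← Finset.range_eq_Ico]
      congr 1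
      congr 1
      rw [Finset.sum_Ico_eq_sum_range]
      simp [pow_succ, mul_comm]
    rw [Finset.sum_congr rfl key, Finset.sum_add_distrib, Finset.sum_add_distrib]
    have hswap : ∑ j ∈ range (n + 1), ∑ i ∈ Ico (j + 1) (n + 1),
        Nat.choose n i * (Nat.choose n j) ^ 2 =
        ∑ j ∈ range (n + 1), ∑ i ∈ range j, Nat.choose n j * (Nat.choose n i) ^ 2 := by
      rw [Finset.sum_sigma', Finset.sum_sigma']
      refine Finset.sum_nbij' (fun p => ⟨p.2, p.1⟩) (fun p => ⟨p.2, p.1⟩) ?_ ?_ ?_ ?_ ?_ <;>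
        rintro ⟨a, b⟩ h <;>
        simp only [Finset.mem_sigma, Finset.mem_range, Finset.mem_Ico] at * <;> omega
    rw [hswap]
    ring
  rw [← hall, hsplit, strict_sum_symm]
  ring
end
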